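/- Let T and T' be monads on the category Cat of categories such that the underlying endofunctor of T preserves b.o. full functors (if a functor F is bijective on objects and full, then so is T.map F), and let e : T ⟶ T' be a monad morphism each of whose components e_X : T(X) ⥤ T'(X) is bijective on objects and full. Let (A, a') be a T'-algebra, let B be a category, let m : B ⥤ A be a faithful functor, and let b : T(B) ⥤ B be a T-algebra structure on B making m a morphism of T-algebras from (B, b) to (A, e_A ≫ a'), i.e., b ≫ m = T(m) ≫ e_A ≫ a'. Then there exists a unique functor b' : T'(B) ⥤ B such that e_B ≫ b' = b and b' ≫ m = T'(m) ≫ a'; moreover (B, b') is a T'-algebra (it satisfies the unit and multiplication axioms), and m is a morphism of T'-algebras from (B, b') to (A, a'). -/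

import Mathlib

open CategoryTheory

universe v u

/-- Bijective-on-objects full functors are epimorphisms in `Cat`. -/
theorem cancel_bofull {X Y Z : Cat.{v, u}} (F : X ⟶ Y)
    (hb : Function.Surjective F.toFunctor.obj) (hf : F.toFunctor.Full) {G H : Y ⟶ Z}
    (h : F ≫ G = F ≫ H) : G = H := by
  haveI := hf
  have h := congrArg Cat.Hom.toFunctor h
  have hobj : ∀ y : Y, G.toFunctor.obj y = H.toFunctor.obj y := by
    intro y
    obtain ⟨x, rfl⟩ := hb y
    exact Functor.congr_obj h x
  refine Cat.ext (CategoryTheory.Functor.ext hobj ?_)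
  intro y y' f
  obtain ⟨x, rfl⟩ := hb y
  obtain ⟨x', rfl⟩ := hb y'
  obtain ⟨g, rfl⟩ := F.toFunctor.map_surjective f
  have := Functor.congr_hom h g
  simp only [Cat.Hom.comp_toFunctor, Functor.comp_obj, Functor.comp_map] at this ⊢
  rw [this]


/-- Closure under subalgebras for a quotient of monads on `Cat`.  Let `T`, `T'` be monads
on `Cat` such that `T` preserves bijective-on-objects-and-full functors, and let
`e : T ⟶ T'` be a monad morphism with bijective-on-objects-and-full components.  Given a
`T'`-algebra `(A, a')`, a faithful functor `m : B ⥤ A` and a `T`-algebra structure `b` on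
`B` making `m` a `T`-algebra morphism `(B, b) ⟶ (A, e_A ≫ a')`, there is a unique
`b' : T'(B) ⥤ B` with `e_B ≫ b' = b` and `b' ≫ m = T'(m) ≫ a'`; moreover `b'` satisfies
the unit and multiplication axioms (so `(B, b')` is a `T'`-algebra and `m` is a morphism
of `T'`-algebras `(B, b') ⟶ (A, a')`). -/
theorem subalgebra_closure_of_bofull_monad_quotient
    (T T' : Monad Cat.{v, u})
    (hT : ∀ {X Y : Cat.{v, u}} (F : X ⟶ Y), Function.Bijective F.toFunctor.obj → F.toFunctor.Full →
      Function.Bijective ((T : Cat.{v, u} ⥤ Cat.{v, u}).map F).toFunctor.obj ∧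
        ((T : Cat.{v, u} ⥤ Cat.{v, u}).map F).toFunctor.Full)
    (e : T ⟶ T')
    (he : ∀ X : Cat.{v, u}, Function.Bijective (e.app X).toFunctor.obj ∧ (e.app X).toFunctor.Full)
    (X' : Monad.Algebra T') (B : Cat.{v, u}) (m : B ⟶ X'.A) (hm : m.toFunctor.Faithful)
    (b : (T : Cat.{v, u} ⥤ Cat.{v, u}).obj B ⟶ B)
    (hunit : T.η.app B ≫ b = 𝟙 B)
    (hassoc : T.μ.app B ≫ b = (T : Cat.{v, u} ⥤ Cat.{v, u}).map b ≫ b)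
    (hhom : b ≫ m = (T : Cat.{v, u} ⥤ Cat.{v, u}).map m ≫ e.app X'.A ≫ X'.a) :
    ∃ b' : (T' : Cat.{v, u} ⥤ Cat.{v, u}).obj B ⟶ B,
      (e.app B ≫ b' = b) ∧
      (b' ≫ m = (T' : Cat.{v, u} ⥤ Cat.{v, u}).map m ≫ X'.a) ∧
      (T'.η.app B ≫ b' = 𝟙 B) ∧
      (T'.μ.app B ≫ b' = (T' : Cat.{v, u} ⥤ Cat.{v, u}).map b' ≫ b') ∧
      (∀ b'' : (T' : Cat.{v, u} ⥤ Cat.{v, u}).obj B ⟶ B,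
        e.app B ≫ b'' = b →
        b'' ≫ m = (T' : Cat.{v, u} ⥤ Cat.{v, u}).map m ≫ X'.a → b'' = b') := by
  haveI hEfull : (e.app B).toFunctor.Full := (he B).2
  have hEbij := (he B).1
  set σ : ((T' : Cat.{v, u} ⥤ Cat.{v, u}).obj B) → ((T : Cat.{v, u} ⥤ Cat.{v, u}).obj B) :=
    fun x => (Equiv.ofBijective _ hEbij).symm x with hσdef
  have hσ : ∀ x, (e.app B).toFunctor.obj (σ x) = x := fun x =>
    (Equiv.ofBijective _ hEbij).apply_symm_apply x
  have hσ' : ∀ u, σ ((e.app B).toFunctor.obj u) = u := fun u =>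
    (Equiv.ofBijective _ hEbij).symm_apply_apply u
  have key : ∀ {u v : ((T : Cat.{v, u} ⥤ Cat.{v, u}).obj B)} (g g' : u ⟶ v),
      (e.app B).toFunctor.map g = (e.app B).toFunctor.map g' → b.toFunctor.map g = b.toFunctor.map g' := by
    intro u v g g' hgg'
    apply hm.map_injective
    have h1 := Functor.congr_hom (congrArg Cat.Hom.toFunctor hhom) g
    have h2 := Functor.congr_hom (congrArg Cat.Hom.toFunctor hhom) g'
    have hn1 := Functor.congr_hom (congrArg Cat.Hom.toFunctor (e.toNatTrans.naturality m)) g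
    have hn2 := Functor.congr_hom (congrArg Cat.Hom.toFunctor (e.toNatTrans.naturality m)) g'
    simp only [Cat.Hom.comp_toFunctor, Functor.comp_obj, Functor.comp_map] at h1 h2 hn1 hn2
    rw [h1, h2, hn1, hn2, hgg']
  let b' : (T' : Cat.{v, u} ⥤ Cat.{v, u}).obj B ⟶ B := Cat.Hom.ofFunctor
    { obj := fun x => b.toFunctor.obj (σ x)
      map := fun {x y} f =>
        b.toFunctor.map ((e.app B).toFunctor.preimage (eqToHom (hσ x) ≫ f ≫ eqToHom (hσ y).symm))
      map_id := fun x => by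
        rw [key _ (𝟙 (σ x)) (by simp)]; exact b.toFunctor.map_id (σ x)
      map_comp := fun {x y z} f g => by
        rw [key _ ((e.app B).toFunctor.preimage (eqToHom (hσ x) ≫ f ≫ eqToHom (hσ y).symm) ≫
              (e.app B).toFunctor.preimage (eqToHom (hσ y) ≫ g ≫ eqToHom (hσ z).symm)) (by simp),
          Functor.map_comp] }
  have h1 : e.app B ≫ b' = b := by
    refine Cat.ext (CategoryTheory.Functor.ext (fun u => by simp [b', hσ']) ?_)
    intro u v f
    have : (e.app B ≫ b').toFunctor.map f =
        b.toFunctor.map ((e.app B).toFunctor.preimage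
          (eqToHom (hσ ((e.app B).toFunctor.obj u)) ≫ (e.app B).toFunctor.map f ≫ eqToHom (hσ ((e.app B).toFunctor.obj v)).symm)) := rfl
    rw [this, key _ (eqToHom (hσ' u) ≫ f ≫ eqToHom (hσ' v).symm) (by simp [eqToHom_map])]
    simp [b', eqToHom_map]
  have h2 : b' ≫ m = (T' : Cat.{v, u} ⥤ Cat.{v, u}).map m ≫ X'.a := by
    apply cancel_bofull (e.app B) hEbij.2 hEfull
    rw [← Category.assoc, h1, hhom, ← Category.assoc, e.toNatTrans.naturality m, Category.assoc]
  have h3 : T'.η.app B ≫ b' = 𝟙 B := by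
    rw [← e.app_η B, Category.assoc, h1, hunit]
  have h4 : T'.μ.app B ≫ b' = (T' : Cat.{v, u} ⥤ Cat.{v, u}).map b' ≫ b' := by
    apply cancel_bofull (e.app ((T' : Cat.{v, u} ⥤ Cat.{v, u}).obj B)) (he _).1.2 (he _).2
    apply cancel_bofull ((T : Cat.{v, u} ⥤ Cat.{v, u}).map (e.app B))
      (hT (e.app B) hEbij hEfull).1.2 (hT (e.app B) hEbij hEfull).2
    have hμ := e.app_μ B
    calc (T : Cat.{v, u} ⥤ Cat.{v, u}).map (e.app B) ≫ e.app _ ≫ T'.μ.app B ≫ b'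
        = ((T : Cat.{v, u} ⥤ Cat.{v, u}).map (e.app B) ≫ e.app _ ≫ T'.μ.app B) ≫ b' := by
          simp only [Category.assoc]
      _ = (T.μ.app B ≫ e.app B) ≫ b' := by rw [hμ]; simp only [Category.assoc]
      _ = T.μ.app B ≫ b := by rw [Category.assoc, h1]
      _ = (T : Cat.{v, u} ⥤ Cat.{v, u}).map b ≫ b := hassoc
      _ = (T : Cat.{v, u} ⥤ Cat.{v, u}).map (e.app B ≫ b') ≫ b := by rw [h1]
      _ = (T : Cat.{v, u} ⥤ Cat.{v, u}).map (e.app B) ≫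
            (T : Cat.{v, u} ⥤ Cat.{v, u}).map b' ≫ e.app B ≫ b' := by
          rw [Functor.map_comp, h1]; simp only [Category.assoc]
      _ = (T : Cat.{v, u} ⥤ Cat.{v, u}).map (e.app B) ≫ e.app _ ≫ T'.map b' ≫ b' := by
          rw [← Category.assoc ((T : Cat.{v, u} ⥤ Cat.{v, u}).map b'), e.toNatTrans.naturality b']
          simp only [Category.assoc]
  have h5 : ∀ b'' : (T' : Cat.{v, u} ⥤ Cat.{v, u}).obj B ⟶ B,
      e.app B ≫ b'' = b →
      b'' ≫ m = (T' : Cat.{v, u} ⥤ Cat.{v, u}).map m ≫ X'.a → b'' = b' := by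
    intro b'' hb1 _
    exact cancel_bofull (e.app B) hEbij.2 hEfull (hb1.trans h1.symm)
  exact ⟨b', h1, h2, h3, h4, h5⟩
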